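/- Corollary (single Gaussian case): If P₀ is a nondegenerate p-variate normal distribution with mean μ₀ and covariance Σ₀ (|Σ₀| ≠ 0), then for the untrimmed case α = 0 the population classification likelihood does not increase with k: 𝓛ᴨ_{0,1}(P₀) = 𝓛ᴨ_{0,k}(P₀) for every k ∈ ℕ. Equivalently, for any k, any Gaussian parameters θ = {θ_j}_{j=1}^k and weights π summing to 1, E_{P₀}[log φ(X; μ₀, Σ₀)] ≥ E_{P₀}[Σ_{j=1}^k 1_{Z_j(θ,π)}(X) log(π_j φ(X;θ_j))]. -/

import Mathlib

open MeasureTheory Matrix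
open Real


variable {p : ℕ}

open scoped MatrixOrder in
noncomputable def Matrix.PosSemidef.sqrt {p : ℕ} {A : Matrix (Fin p) (Fin p) ℝ} (_ : A.PosSemidef) :
    Matrix (Fin p) (Fin p) ℝ :=
  CFC.sqrt A

open scoped MatrixOrder in
lemma Matrix.PosSemidef.sqrt_mul_self {p : ℕ} {A : Matrix (Fin p) (Fin p) ℝ} (hA : A.PosSemidef) :
    hA.sqrt * hA.sqrt = A :=
  CFC.sqrt_mul_sqrt_self A hA.nonneg

open scoped MatrixOrder in
lemma Matrix.PosSemidef.posSemidef_sqrt {p : ℕ} {A : Matrix (Fin p) (Fin p) ℝ} (hA : A.PosSemidef) :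
    hA.sqrt.PosSemidef :=
  (CFC.sqrt_nonneg A).posSemidef


noncomputable def qd {p : ℕ} (A : Matrix (Fin p) (Fin p) ℝ) (m : Fin p → ℝ) (x : Fin p → ℝ) : ℝ :=
  (x - m) ⬝ᵥ (A *ᵥ (x - m))

lemma qd_continuous {p : ℕ} (A : Matrix (Fin p) (Fin p) ℝ) (m : Fin p → ℝ) :
    Continuous (qd A m) := by
  unfold qd dotProduct Matrix.mulVec
  apply continuous_finset_sum; intro i _
  exact ((continuous_apply i).sub continuous_const).mul
    (continuous_finset_sum _ fun j _ => continuous_const.mul ((continuous_apply j).sub continuous_const))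

lemma qd_nonneg {p : ℕ} {A : Matrix (Fin p) (Fin p) ℝ} (hA : A.PosSemidef) (m x : Fin p → ℝ) :
    0 ≤ qd A m x := by
  have := hA.dotProduct_mulVec_nonneg (x - m)
  simpa [qd] using this

lemma qd_pos {p : ℕ} {A : Matrix (Fin p) (Fin p) ℝ} (hA : A.PosDef) {m x : Fin p → ℝ}
    (hx : x ≠ m) : 0 < qd A m x := by
  have := hA.dotProduct_mulVec_pos (sub_ne_zero.mpr hx)
  simpa [qd] using this

lemma base_integral :
    ∫ y : Fin p → ℝ, rexp (-(1/2) * ∑ i, y i ^ 2) = (2 * π) ^ ((p : ℝ) / 2) := by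
  rw [← (EuclideanSpace.volume_preserving_symm_measurableEquiv_toLp (Fin p)).integral_comp
    (MeasurableEquiv.measurableEmbedding _) (fun y => rexp (-(1/2) * ∑ i, y i ^ 2))]
  have h : ∀ v : EuclideanSpace ℝ (Fin p),
      (∑ i, ((MeasurableEquiv.toLp 2 (Fin p → ℝ)).symm v) i ^ 2) = ‖v‖ ^ 2 := by
    intro v
    rw [EuclideanSpace.norm_eq]
    rw [Real.sq_sqrt (by positivity)]
    simp
  simp_rw [h]
  rw [GaussianFourier.integral_rexp_neg_mul_sq_norm (by norm_num : (0:ℝ) < 1/2)]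
  rw [finrank_euclideanSpace_fin]
  congr 1
  ring

lemma base_integrable :
    Integrable (fun y : Fin p → ℝ => rexp (-(1/2) * ∑ i, y i ^ 2)) := by
  have := EuclideanSpace.volume_preserving_symm_measurableEquiv_toLp (Fin p)
  rw [← this.integrable_comp_emb (MeasurableEquiv.measurableEmbedding _)]
  have h : ∀ v : EuclideanSpace ℝ (Fin p),
      (∑ i, ((MeasurableEquiv.toLp 2 (Fin p → ℝ)).symm v) i ^ 2) = ‖v‖ ^ 2 := by
    intro v
    rw [EuclideanSpace.norm_eq, Real.sq_sqrt (by positivity)]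
    simp
  have key := (GaussianFourier.integrable_cexp_neg_mul_sq_norm_add
    (V := EuclideanSpace ℝ (Fin p)) (b := (1/2 : ℂ)) (by norm_num) 0 0).norm
  have : (fun v : EuclideanSpace ℝ (Fin p) =>
      ‖Complex.exp (-(1/2 : ℂ) * (‖v‖:ℂ) ^ 2 + 0 * (inner ℝ (0 : EuclideanSpace ℝ (Fin p)) v : ℝ))‖)
      = fun v => rexp (-(1/2) * ‖v‖ ^ 2) := by
    funext v
    rw [Complex.norm_exp]
    simp [← Complex.ofReal_pow]
  rw [this] at key
  have : (fun y : Fin p → ℝ => rexp (-(1/2) * ∑ i, y i ^ 2)) ∘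
      ((MeasurableEquiv.toLp 2 (Fin p → ℝ)).symm) = fun v => rexp (-(1/2) * ‖v‖ ^ 2) := by
    funext v; simp only [Function.comp_apply, h v]
  rw [this]
  exact key

section
variable {p : ℕ} {A : Matrix (Fin p) (Fin p) ℝ}

lemma qd_eq_sq_sum (hA : A.PosDef) (m : Fin p → ℝ) :
    ∀ x, qd A m x = ∑ i, ((hA.posSemidef.sqrt) *ᵥ (x - m)) i ^ 2 := by
  intro x
  set B := hA.posSemidef.sqrt with hBdef
  have hBt : Bᵀ = B := by
    have h := hA.posSemidef.posSemidef_sqrt.1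
    rw [Matrix.IsHermitian] at h
    simpa using h
  have hBB : B * B = A := hA.posSemidef.sqrt_mul_self
  show (x - m) ⬝ᵥ (A *ᵥ (x - m)) = _
  conv_lhs => rw [← hBB]
  rw [← Matrix.mulVec_mulVec, Matrix.dotProduct_mulVec, ← Matrix.mulVec_transpose, hBt]
  simp [dotProduct, sq]

lemma detB_sq (hA : A.PosDef) : hA.posSemidef.sqrt.det ^ 2 = A.det := by
  rw [sq, ← Matrix.det_mul, hA.posSemidef.sqrt_mul_self]

lemma detB_ne (hA : A.PosDef) : hA.posSemidef.sqrt.det ≠ 0 := by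
  intro h
  have := detB_sq hA
  rw [h] at this
  exact hA.det_pos.ne' (by simpa using this.symm)

lemma abs_detB_inv (hA : A.PosDef) : |hA.posSemidef.sqrt.det⁻¹| = A.det ^ (-(1:ℝ)/2) := by
  have h1 : Real.sqrt A.det = |hA.posSemidef.sqrt.det| := by
    rw [← detB_sq hA]; exact Real.sqrt_sq_eq_abs _
  rw [abs_inv, ← h1, neg_div, Real.rpow_neg hA.det_pos.le, Real.sqrt_eq_rpow]

lemma map_eq (hA : A.PosDef) : Measure.map (Matrix.toLin' hA.posSemidef.sqrt) volume
    = ENNReal.ofReal |hA.posSemidef.sqrt.det⁻¹| • volume := by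
  have hd : LinearMap.det (Matrix.toLin' hA.posSemidef.sqrt) = hA.posSemidef.sqrt.det :=
    LinearMap.det_toLin' _
  rw [MeasureTheory.Measure.map_linearMap_addHaar_pi_eq_smul_addHaar (by rw [hd]; exact detB_ne hA)]
  rw [hd]

lemma comp_eq (hA : A.PosDef) : (fun y : Fin p → ℝ => rexp (-(1/2) * qd A 0 y))
    = (fun z : Fin p → ℝ => rexp (-(1/2) * ∑ i, z i ^ 2)) ∘ (Matrix.toLin' hA.posSemidef.sqrt) := by
  funext y
  simp only [Function.comp, Matrix.toLin'_apply]
  rw [qd_eq_sq_sum hA 0 y]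
  simp

lemma gauss_integrable0 (hA : A.PosDef) :
    Integrable (fun y : Fin p → ℝ => rexp (-(1/2) * qd A 0 y)) := by
  rw [comp_eq hA]
  have hg : AEStronglyMeasurable (fun z : Fin p → ℝ => rexp (-(1/2) * ∑ i, z i ^ 2))
      (Measure.map (Matrix.toLin' hA.posSemidef.sqrt) volume) := by
    apply Continuous.aestronglyMeasurable
    exact Real.continuous_exp.comp (continuous_const.mul
      (continuous_finset_sum _ fun i _ => (continuous_apply i).pow 2))
  rw [← integrable_map_measure hg
    ((Matrix.toLin' hA.posSemidef.sqrt).continuous_of_finiteDimensional).aemeasurable]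
  rw [map_eq hA]
  exact (base_integrable).smul_measure ENNReal.ofReal_ne_top

lemma gauss_integrable (hA : A.PosDef) (m : Fin p → ℝ) :
    Integrable (fun x => rexp (-(1/2) * qd A m x)) := by
  have := (gauss_integrable0 hA).comp_sub_right m
  simpa [qd] using this

lemma gauss_integral (hA : A.PosDef) (m : Fin p → ℝ) : ∫ x, rexp (-(1/2) * qd A m x)
    = (2 * π) ^ ((p : ℝ) / 2) * A.det ^ (-(1:ℝ)/2) := by
  have h1 : ∫ x, rexp (-(1/2) * qd A m x) = ∫ x, rexp (-(1/2) * qd A 0 x) := by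
    rw [← MeasureTheory.integral_sub_right_eq_self (μ := volume)
      (fun y => rexp (-(1/2) * qd A 0 y)) m]
    congr 1; funext x; simp [qd]
  rw [h1]
  calc ∫ x, rexp (-(1/2) * qd A 0 x)
      = ∫ x, ((fun z : Fin p → ℝ => rexp (-(1/2) * ∑ i, z i ^ 2))
          ∘ (Matrix.toLin' hA.posSemidef.sqrt)) x := by rw [← comp_eq hA]
    _ = ∫ z, rexp (-(1/2) * ∑ i, z i ^ 2)
          ∂(Measure.map (Matrix.toLin' hA.posSemidef.sqrt) volume) := by
        have hcont : Continuous (fun z : Fin p → ℝ => rexp (-(1/2) * ∑ i, z i ^ 2)) :=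
          Real.continuous_exp.comp (continuous_const.mul
            (continuous_finset_sum _ fun i _ => (continuous_apply i).pow 2))
        rw [MeasureTheory.integral_map
          ((Matrix.toLin' hA.posSemidef.sqrt).continuous_of_finiteDimensional).aemeasurable
          hcont.aestronglyMeasurable]
        simp [Function.comp]
    _ = |hA.posSemidef.sqrt.det⁻¹| * ∫ z : Fin p → ℝ, rexp (-(1/2) * ∑ i, z i ^ 2) := by
        rw [map_eq hA, MeasureTheory.integral_smul_measure,
          ENNReal.toReal_ofReal (abs_nonneg _), smul_eq_mul]
    _ = (2 * π) ^ ((p : ℝ) / 2) * A.det ^ (-(1:ℝ)/2) := by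
        rw [base_integral, abs_detB_inv hA, mul_comm]
end

section bounds
variable {p : ℕ} {A : Matrix (Fin p) (Fin p) ℝ}

lemma sum_sq_pos {x : Fin p → ℝ} (hx : x ≠ 0) : 0 < ∑ i, x i ^ 2 := by
  rcases Function.ne_iff.mp hx with ⟨i, hi⟩
  have : (0:ℝ) < x i ^ 2 := lt_of_le_of_ne (sq_nonneg _) (Ne.symm (pow_ne_zero 2 hi))
  exact lt_of_lt_of_le this (Finset.single_le_sum (fun j _ => sq_nonneg (x j)) (Finset.mem_univ i))

lemma posdef_lower (hA : A.PosDef) :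
    ∃ c > 0, ∀ x : Fin p → ℝ, c * ∑ i, x i ^ 2 ≤ x ⬝ᵥ A *ᵥ x := by
  rcases Nat.eq_zero_or_pos p with hp | hp
  · refine ⟨1, one_pos, fun x => ?_⟩
    subst hp
    simp [dotProduct]
  · set Sph : Set (Fin p → ℝ) := {x | ∑ i, x i ^ 2 = 1} with hSph
    have hcont : Continuous (fun x : Fin p → ℝ => x ⬝ᵥ A *ᵥ x) := by
      unfold dotProduct Matrix.mulVec
      apply continuous_finset_sum; intro i _
      exact (continuous_apply i).mul
        (continuous_finset_sum _ fun j _ => continuous_const.mul (continuous_apply j))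
    have hclosed : IsClosed Sph :=
      isClosed_eq (continuous_finset_sum _ fun i _ => (continuous_apply i).pow 2) continuous_const
    have hbdd : Bornology.IsBounded Sph := by
      apply Metric.isBounded_iff_subset_closedBall (0 : Fin p → ℝ) |>.mpr
      refine ⟨1, fun x hx => ?_⟩
      simp only [Metric.mem_closedBall, dist_zero_right]
      rw [pi_norm_le_iff_of_nonneg zero_le_one]
      intro i
      rw [Real.norm_eq_abs, abs_le]
      have h1 : x i ^ 2 ≤ 1 := by
        rw [← hx]
        exact Finset.single_le_sum (fun j _ => sq_nonneg (x j)) (Finset.mem_univ i)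
      constructor <;> nlinarith
    have hcomp : IsCompact Sph := Metric.isCompact_of_isClosed_isBounded hclosed hbdd
    have hne : Sph.Nonempty := by
      refine ⟨Pi.single ⟨0, hp⟩ 1, ?_⟩
      simp [hSph, Pi.single_apply]
    obtain ⟨x₀, hx₀S, hx₀min⟩ := hcomp.exists_isMinOn hne hcont.continuousOn
    have hx₀ne : x₀ ≠ 0 := by
      intro h
      rw [h] at hx₀S
      simp [hSph] at hx₀S
    refine ⟨x₀ ⬝ᵥ A *ᵥ x₀, hA.dotProduct_mulVec_pos hx₀ne |>.trans_eq (by simp), fun x => ?_⟩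
    rcases eq_or_ne x 0 with rfl | hx
    · simp
    · have hs : 0 < ∑ i, x i ^ 2 := sum_sq_pos hx
      set t : ℝ := (Real.sqrt (∑ i, x i ^ 2))⁻¹ with ht
      have htpos : 0 < t := inv_pos.mpr (Real.sqrt_pos.mpr hs)
      have ht2 : t ^ 2 = (∑ i, x i ^ 2)⁻¹ := by
        rw [ht, ← Real.sqrt_inv, Real.sq_sqrt (by positivity)]
      have hmem : t • x ∈ Sph := by
        simp only [hSph, Set.mem_setOf_eq, Pi.smul_apply, smul_eq_mul, mul_pow]
        rw [← Finset.mul_sum, ht2]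
        field_simp
      have hval : (t • x) ⬝ᵥ A *ᵥ (t • x) = t ^ 2 * (x ⬝ᵥ A *ᵥ x) := by
        rw [Matrix.mulVec_smul, smul_dotProduct, dotProduct_smul]
        simp [sq, mul_assoc]
      have := hx₀min hmem
      simp only [Set.mem_setOf_eq] at this
      have h2 : x₀ ⬝ᵥ A *ᵥ x₀ ≤ t ^ 2 * (x ⬝ᵥ A *ᵥ x) := by
        calc x₀ ⬝ᵥ A *ᵥ x₀ ≤ (t • x) ⬝ᵥ A *ᵥ (t • x) := this
          _ = t ^ 2 * (x ⬝ᵥ A *ᵥ x) := hval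
      rw [ht2] at h2
      calc (x₀ ⬝ᵥ A *ᵥ x₀) * ∑ i, x i ^ 2 ≤ ((∑ i, x i ^ 2)⁻¹ * (x ⬝ᵥ A *ᵥ x)) * ∑ i, x i ^ 2 := by
            apply mul_le_mul_of_nonneg_right h2 hs.le
        _ = x ⬝ᵥ A *ᵥ x := by field_simp

lemma quad_upper (A : Matrix (Fin p) (Fin p) ℝ) (x : Fin p → ℝ) :
    x ⬝ᵥ A *ᵥ x ≤ (∑ i, ∑ j, |A i j|) * ∑ i, x i ^ 2 := by
  have hexp : x ⬝ᵥ A *ᵥ x = ∑ i, ∑ j, x i * (A i j * x j) := by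
    unfold dotProduct Matrix.mulVec dotProduct
    congr 1; funext i
    rw [Finset.mul_sum]
  rw [hexp, Finset.sum_mul]
  apply Finset.sum_le_sum
  intro i _
  rw [Finset.sum_mul]
  apply Finset.sum_le_sum
  intro j _
  have hS : ∀ l, x l ^ 2 ≤ ∑ i, x i ^ 2 := fun l =>
    Finset.single_le_sum (fun r _ => sq_nonneg (x r)) (Finset.mem_univ l)
  have h1 := hS i
  have h2 := hS j
  have ha1 : A i j ≤ |A i j| := le_abs_self _
  have ha2 : -|A i j| ≤ A i j := neg_abs_le _
  nlinarith [sq_nonneg (x i + x j), sq_nonneg (x i - x j), abs_nonneg (A i j),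
    sq_nonneg (x i), sq_nonneg (x j)]

lemma posdef_half_smul (hA : A.PosDef) : ((2:ℝ)⁻¹ • A).PosDef := by
  constructor
  · have h := hA.1
    rw [Matrix.IsHermitian] at h ⊢
    rw [Matrix.conjTranspose_smul]
    rw [h]
    congr 1
  · intro x hx
    exact (hA.smul (by norm_num : (0:ℝ) < 2⁻¹)).2 hx

lemma qd_half (m x : Fin p → ℝ) : qd ((2:ℝ)⁻¹ • A) m x = 2⁻¹ * qd A m x := by
  unfold qd
  rw [Matrix.smul_mulVec, dotProduct_smul]
  simp

lemma integrable_poly_gauss (hA : A.PosDef) (m : Fin p → ℝ) (a b : ℝ) :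
    Integrable (fun x : Fin p → ℝ => (a + b * ∑ i, x i ^ 2) * rexp (-(1/2) * qd A m x)) := by
  obtain ⟨c, hc, hlow⟩ := posdef_lower hA
  have hsum : ∀ x : Fin p → ℝ, ∑ i, x i ^ 2 ≤ 2 * ∑ i, (x - m) i ^ 2 + 2 * ∑ i, m i ^ 2 := by
    intro x
    rw [Finset.mul_sum, Finset.mul_sum, ← Finset.sum_add_distrib]
    apply Finset.sum_le_sum
    intro i _
    simp only [Pi.sub_apply]
    nlinarith [sq_nonneg (x i - 2 * m i)]
  have hqd_low : ∀ x : Fin p → ℝ, c * ∑ i, (x - m) i ^ 2 ≤ qd A m x := fun x => hlow (x - m)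
  set a₁ : ℝ := |a| + 2 * |b| * ∑ i, m i ^ 2 with ha₁
  set b₁ : ℝ := 2 * |b| / c with hb₁
  have ha₁0 : 0 ≤ a₁ := by positivity
  have hb₁0 : 0 ≤ b₁ := by positivity
  set M : ℝ := a₁ + 4 * b₁ with hM
  have hbound : ∀ x : Fin p → ℝ,
      |(a + b * ∑ i, x i ^ 2) * rexp (-(1/2) * qd A m x)|
        ≤ M * rexp (-(1/2) * qd ((2:ℝ)⁻¹ • A) m x) := by
    intro x
    set q : ℝ := qd A m x with hq
    have hq0 : 0 ≤ q := qd_nonneg hA.posSemidef m x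
    have hpoly : |a + b * ∑ i, x i ^ 2| ≤ a₁ + b₁ * q := by
      have h1 : |a + b * ∑ i, x i ^ 2| ≤ |a| + |b| * ∑ i, x i ^ 2 := by
        refine (abs_add_le _ _).trans ?_
        rw [abs_mul, abs_of_nonneg (show (0:ℝ) ≤ ∑ i, x i ^ 2 by positivity)]
      refine h1.trans ?_
      have h3 : ∑ i, (x - m) i ^ 2 ≤ q / c := by
        rw [le_div_iff₀ hc, mul_comm]
        exact hqd_low x
      have h2 : ∑ i, x i ^ 2 ≤ 2 / c * q + 2 * ∑ i, m i ^ 2 := by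
        have h5 : (2:ℝ) / c * q = 2 * (q / c) := by ring
        rw [h5]
        have := hsum x
        linarith
      have hb := abs_nonneg b
      calc |a| + |b| * ∑ i, x i ^ 2 ≤ |a| + |b| * (2 / c * q + 2 * ∑ i, m i ^ 2) := by nlinarith
        _ = a₁ + b₁ * q := by rw [ha₁, hb₁]; field_simp; ring
    rw [abs_mul, Real.abs_exp, qd_half, ← hq]
    have hsplit : rexp (-(1/2) * q) = rexp (-(1/4) * q) * rexp (-(1/4) * q) := by
      rw [← Real.exp_add]; ring_nf
    have hqe : q * rexp (-(1/4) * q) ≤ 4 := by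
      have h4 : q/4 + 1 ≤ rexp (q/4) := by
        have := Real.add_one_le_exp (q/4); linarith
      have hpos : (0:ℝ) < rexp (q/4) := Real.exp_pos _
      have hrw : rexp (-(1/4) * q) = (rexp (q/4))⁻¹ := by
        rw [← Real.exp_neg]; congr 1; ring
      rw [hrw, inv_eq_one_div, mul_one_div, div_le_iff₀ hpos]
      nlinarith
    have hexp2 : rexp (-(1/2) * q) ≤ rexp (-(1/4) * q) := by
      apply Real.exp_le_exp.mpr
      nlinarith
    calc |a + b * ∑ i, x i ^ 2| * rexp (-(1/2) * q)
        ≤ (a₁ + b₁ * q) * rexp (-(1/2) * q) :=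
          mul_le_mul_of_nonneg_right hpoly (Real.exp_pos _).le
      _ = a₁ * rexp (-(1/2) * q) + b₁ * (q * rexp (-(1/4) * q)) * rexp (-(1/4) * q) := by
          rw [hsplit]; ring
      _ ≤ a₁ * rexp (-(1/4) * q) + b₁ * 4 * rexp (-(1/4) * q) := by
          have e1 : a₁ * rexp (-(1/2) * q) ≤ a₁ * rexp (-(1/4) * q) :=
            mul_le_mul_of_nonneg_left hexp2 ha₁0
          have e2 : b₁ * (q * rexp (-(1/4) * q)) * rexp (-(1/4) * q)
              ≤ b₁ * 4 * rexp (-(1/4) * q) := by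
            apply mul_le_mul_of_nonneg_right _ (Real.exp_pos _).le
            exact mul_le_mul_of_nonneg_left hqe hb₁0
          linarith
      _ = M * rexp (-(1/2) * (2⁻¹ * q)) := by rw [hM]; ring_nf
  have hint : Integrable (fun x : Fin p → ℝ => M * rexp (-(1/2) * qd ((2:ℝ)⁻¹ • A) m x)) :=
    (gauss_integrable (posdef_half_smul hA) m).const_mul M
  apply hint.mono
  · apply Continuous.aestronglyMeasurable
    exact (continuous_const.add (continuous_const.mul
        (continuous_finset_sum _ fun i _ => (continuous_apply i).pow 2))).mul
      (Real.continuous_exp.comp (continuous_const.mul (qd_continuous A m)))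
  · filter_upwards with x
    rw [Real.norm_eq_abs, Real.norm_eq_abs]
    exact (hbound x).trans (le_abs_self _)

end bounds

/-- The `p`-variate Gaussian density with mean `m` and covariance matrix `S`. -/
noncomputable def gpdf {p : ℕ} (m : Fin p → ℝ) (S : Matrix (Fin p) (Fin p) ℝ)
    (x : Fin p → ℝ) : ℝ :=
  (2 * Real.pi) ^ (-(p : ℝ) / 2) * S.det ^ (-(1 : ℝ) / 2) *
    Real.exp (-(1 / 2) * ((x - m) ⬝ᵥ (S⁻¹ *ᵥ (x - m))))

section gpdfFacts
variable {p : ℕ} {S : Matrix (Fin p) (Fin p) ℝ} (m : Fin p → ℝ)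

lemma gpdf_eq (x : Fin p → ℝ) :
    gpdf m S x = ((2 * π) ^ (-(p:ℝ)/2) * S.det ^ (-(1:ℝ)/2)) * rexp (-(1/2) * qd S⁻¹ m x) := rfl

lemma csS_pos (hS : S.PosDef) : 0 < (2 * π) ^ (-(p:ℝ)/2) * S.det ^ (-(1:ℝ)/2) :=
  mul_pos (Real.rpow_pos_of_pos (by positivity) _) (Real.rpow_pos_of_pos hS.det_pos _)

lemma gpdf_pos (hS : S.PosDef) (x : Fin p → ℝ) : 0 < gpdf m S x := by
  rw [gpdf_eq]
  exact mul_pos (csS_pos hS) (Real.exp_pos _)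

lemma gpdf_continuous : Continuous (gpdf m S) := by
  have : Continuous (fun x => rexp (-(1/2) * qd S⁻¹ m x)) :=
    Real.continuous_exp.comp (continuous_const.mul (qd_continuous S⁻¹ m))
  exact continuous_const.mul this

lemma gpdf_integrable (hS : S.PosDef) : Integrable (gpdf m S) := by
  have := (gauss_integrable hS.inv m).const_mul ((2 * π) ^ (-(p:ℝ)/2) * S.det ^ (-(1:ℝ)/2))
  exact this

lemma integral_gpdf (hS : S.PosDef) : ∫ x, gpdf m S x = 1 := by
  simp_rw [gpdf_eq m]
  rw [MeasureTheory.integral_const_mul, gauss_integral hS.inv m]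
  have hdet : S⁻¹.det = S.det⁻¹ := by
    rw [Matrix.det_nonsing_inv, Ring.inverse_eq_inv]
  rw [hdet, Real.inv_rpow hS.det_pos.le]
  have h2π : (0:ℝ) < 2 * π := by positivity
  have e1 : (2 * π) ^ (-(p:ℝ)/2) * ((2 * π) ^ ((p:ℝ)/2)) = 1 := by
    rw [← Real.rpow_add h2π, neg_div, neg_add_cancel, Real.rpow_zero]
  have e2 : (S.det ^ (-(1:ℝ)/2)) * (S.det ^ (-(1:ℝ)/2))⁻¹ = 1 :=
    mul_inv_cancel₀ (Real.rpow_pos_of_pos hS.det_pos _).ne'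
  calc (2 * π) ^ (-(p:ℝ)/2) * S.det ^ (-(1:ℝ)/2) * ((2 * π) ^ ((p:ℝ)/2) * (S.det ^ (-(1:ℝ)/2))⁻¹)
      = ((2 * π) ^ (-(p:ℝ)/2) * ((2 * π) ^ ((p:ℝ)/2))) * ((S.det ^ (-(1:ℝ)/2)) * (S.det ^ (-(1:ℝ)/2))⁻¹) := by ring
    _ = 1 := by rw [e1, e2, mul_one]

lemma log_gpdf (hS : S.PosDef) (x : Fin p → ℝ) :
    Real.log (gpdf m S x)
      = Real.log ((2 * π) ^ (-(p:ℝ)/2) * S.det ^ (-(1:ℝ)/2)) + (-(1/2) * qd S⁻¹ m x) := by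
  rw [gpdf_eq, Real.log_mul (csS_pos hS).ne' (Real.exp_pos _).ne', Real.log_exp]

/-- Bound for the log of a weighted gaussian density. -/
lemma log_weighted_gpdf_bound (hS : S.PosDef) {w : ℝ} (hw : 0 < w) :
    ∃ a b : ℝ, 0 ≤ a ∧ 0 ≤ b ∧
      ∀ x : Fin p → ℝ, |Real.log (w * gpdf m S x)| ≤ a + b * ∑ i, x i ^ 2 := by
  set cS := (2 * π) ^ (-(p:ℝ)/2) * S.det ^ (-(1:ℝ)/2) with hcS
  set C : ℝ := ∑ i, ∑ j, |S⁻¹ i j| with hC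
  have hC0 : 0 ≤ C := Finset.sum_nonneg fun i _ => Finset.sum_nonneg fun j _ => abs_nonneg _
  refine ⟨|Real.log (w * cS)| + C * ∑ i, m i ^ 2, |Real.log (w * cS)| + C, by positivity,
    by positivity, fun x => ?_⟩
  have hcS0 : (0:ℝ) < w * cS := mul_pos hw (by rw [hcS]; exact csS_pos hS)
  have hlog : Real.log (w * gpdf m S x) = Real.log (w * cS) + (-(1/2) * qd S⁻¹ m x) := by
    rw [gpdf_eq, ← mul_assoc, Real.log_mul hcS0.ne' (Real.exp_pos _).ne', Real.log_exp]
  rw [hlog]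
  have hq0 : 0 ≤ qd S⁻¹ m x := qd_nonneg hS.inv.posSemidef m x
  have hqup : qd S⁻¹ m x ≤ C * ∑ i, (x - m) i ^ 2 := quad_upper S⁻¹ (x - m)
  have hsum : ∑ i, (x - m) i ^ 2 ≤ 2 * ∑ i, x i ^ 2 + 2 * ∑ i, m i ^ 2 := by
    rw [Finset.mul_sum, Finset.mul_sum, ← Finset.sum_add_distrib]
    apply Finset.sum_le_sum
    intro i _
    simp only [Pi.sub_apply]
    nlinarith [sq_nonneg (x i + m i)]
  have habs := abs_add_le (Real.log (w * cS)) (-(1/2) * qd S⁻¹ m x)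
  have h5 : |(-(1/2)) * qd S⁻¹ m x| = (1/2) * qd S⁻¹ m x := by
    rw [abs_mul, abs_of_nonneg hq0]; norm_num
  rw [h5] at habs
  have hx0 : (0:ℝ) ≤ ∑ i, x i ^ 2 := by positivity
  have hm0 : (0:ℝ) ≤ ∑ i, m i ^ 2 := by positivity
  nlinarith [mul_le_mul_of_nonneg_left hsum hC0, mul_nonneg (abs_nonneg (Real.log (w * cS))) hx0]
end gpdfFacts

/-- The weighted maximum-likelihood assignment region `Z_j(θ,π)`, with ties assigned to the
smallest index, so that the `Z_j` partition `ℝᵖ`. -/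
noncomputable def Zpart {p k : ℕ} (w : Fin k → ℝ) (m : Fin k → Fin p → ℝ)
    (S : Fin k → Matrix (Fin p) (Fin p) ℝ) (j : Fin k) : Set (Fin p → ℝ) :=
  {x | (∀ r, w r * gpdf (m r) (S r) x ≤ w j * gpdf (m j) (S j) x) ∧
    ∀ r < j, ¬ ∀ s, w s * gpdf (m s) (S s) x ≤ w r * gpdf (m r) (S r) x}

section ZpartFacts
variable {p k : ℕ} (w : Fin k → ℝ) (m : Fin k → Fin p → ℝ)
  (S : Fin k → Matrix (Fin p) (Fin p) ℝ)

lemma measurableSet_Zpart (j : Fin k) : MeasurableSet (Zpart w m S j) := by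
  have h1 : ∀ r j' : Fin k, MeasurableSet
      {x : Fin p → ℝ | w r * gpdf (m r) (S r) x ≤ w j' * gpdf (m j') (S j') x} := fun r j' =>
    measurableSet_le (continuous_const.mul (gpdf_continuous (m r))).measurable
      (continuous_const.mul (gpdf_continuous (m j'))).measurable
  have heq : Zpart w m S j =
      (⋂ r, {x : Fin p → ℝ | w r * gpdf (m r) (S r) x ≤ w j * gpdf (m j) (S j) x}) ∩
      (⋂ r, ⋂ (_ : r < j),
        (⋂ s, {x : Fin p → ℝ | w s * gpdf (m s) (S s) x ≤ w r * gpdf (m r) (S r) x})ᶜ) := by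
    ext x
    simp only [Zpart, Set.mem_setOf_eq, Set.mem_inter_iff, Set.mem_iInter, Set.mem_compl_iff]
  rw [heq]
  exact (MeasurableSet.iInter fun r => h1 r j).inter
    (MeasurableSet.iInter fun r => MeasurableSet.iInter fun _ =>
      (MeasurableSet.iInter fun s => h1 s r).compl)

lemma Zpart_exists_unique (hk : 0 < k) (x : Fin p → ℝ) :
    ∃! j : Fin k, x ∈ Zpart w m S j := by
  haveI : Nonempty (Fin k) := ⟨⟨0, hk⟩⟩
  set T : Finset (Fin k) :=
    Finset.univ.filter (fun r => ∀ s, w s * gpdf (m s) (S s) x ≤ w r * gpdf (m r) (S r) x) with hT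
  have hTne : T.Nonempty := by
    obtain ⟨r, -, hr⟩ := Finset.exists_max_image Finset.univ
      (fun r => w r * gpdf (m r) (S r) x) ⟨Classical.arbitrary (Fin k), Finset.mem_univ _⟩
    exact ⟨r, Finset.mem_filter.mpr ⟨Finset.mem_univ _, fun s => hr s (Finset.mem_univ s)⟩⟩
  set j₀ := T.min' hTne with hj₀
  have hj₀T : j₀ ∈ T := T.min'_mem hTne
  have hj₀max := (Finset.mem_filter.mp hj₀T).2
  have hmem : x ∈ Zpart w m S j₀ := by
    refine ⟨hj₀max, fun r hr hall => ?_⟩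
    have : j₀ ≤ r := T.min'_le r (Finset.mem_filter.mpr ⟨Finset.mem_univ _, hall⟩)
    exact absurd hr (not_lt.mpr this)
  refine ⟨j₀, hmem, fun j hj => ?_⟩
  by_contra hne
  rcases lt_or_gt_of_ne hne with hlt | hgt
  · exact hmem.2 j hlt hj.1
  · exact hj.2 j₀ hgt hj₀max

lemma Zpart_w_pos (hw : ∀ j, 0 ≤ w j) (hw1 : (∑ j, w j) = 1)
    (hS : ∀ j, (S j).PosDef) {j : Fin k} {x : Fin p → ℝ} (hx : x ∈ Zpart w m S j) :
    0 < w j * gpdf (m j) (S j) x := by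
  obtain ⟨s, hs⟩ : ∃ s, 0 < w s := by
    by_contra h
    push_neg at h
    have : (∑ j, w j) = 0 :=
      Finset.sum_eq_zero fun j _ => le_antisymm (h j) (hw j)
    rw [hw1] at this
    norm_num at this
  have h1 : 0 < w s * gpdf (m s) (S s) x := mul_pos hs (gpdf_pos (m s) (hS s) x)
  exact h1.trans_le (hx.1 s)

lemma Zpart_indicator_sum (hk : 0 < k) (x : Fin p → ℝ) (F : Fin k → (Fin p → ℝ) → ℝ)
    {j₀ : Fin k} (hj₀ : x ∈ Zpart w m S j₀) :
    ∑ j, Set.indicator (Zpart w m S j) (F j) x = F j₀ x := by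
  obtain ⟨j₁, hj₁, huniq⟩ := Zpart_exists_unique w m S hk x
  have hj₀eq : j₀ = j₁ := huniq j₀ hj₀
  subst hj₀eq
  rw [Finset.sum_eq_single j₀]
  · exact Set.indicator_of_mem hj₀ _
  · intro j _ hne
    exact Set.indicator_of_notMem (fun hmem => hne (huniq j hmem)) _
  · intro h
    exact absurd (Finset.mem_univ j₀) h
end ZpartFacts

/-- The denominator `∑ⱼ πⱼ ∫_{Z_j(θ,π)} φ(x;θⱼ) dx` of the normalizing constant. -/
noncomputable def etaDen {p k : ℕ} (w : Fin k → ℝ) (m : Fin k → Fin p → ℝ)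
    (S : Fin k → Matrix (Fin p) (Fin p) ℝ) : ℝ :=
  ∑ j, w j * ∫ x in Zpart w m S j, gpdf (m j) (S j) x

/-- The normalizing constant `η(θ,π)`. -/
noncomputable def eta {p k : ℕ} (w : Fin k → ℝ) (m : Fin k → Fin p → ℝ)
    (S : Fin k → Matrix (Fin p) (Fin p) ℝ) : ℝ :=
  1 / etaDen w m S

/-- The truncated-Gaussian clustering density
`f₀(x) = η(θ,π) ∑ⱼ 1_{Z_j(θ,π)}(x) πⱼ φ(x;θⱼ)`. -/
noncomputable def clusterDensity {p k : ℕ} (w : Fin k → ℝ) (m : Fin k → Fin p → ℝ)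
    (S : Fin k → Matrix (Fin p) (Fin p) ℝ) (x : Fin p → ℝ) : ℝ :=
  eta w m S * ∑ j, Set.indicator (Zpart w m S j) (fun y => w j * gpdf (m j) (S j) y) x

/-- **Corollary (single Gaussian case).** If `P₀` is a nondegenerate `p`-variate normal with
mean `μ₀` and covariance `Σ₀`, then for any `k`, any Gaussian parameters and weights,
`E_{P₀}[log φ(X;μ₀,Σ₀)] ≥ E_{P₀}[∑ⱼ 1_{Z_j(θ,π)}(X) log(πⱼ φ(X;θⱼ))]`, so that in the
untrimmed case the population classification likelihood does not increase with `k`. -/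
theorem single_gaussian_no_gain {p k : ℕ}
    (m₀ : Fin p → ℝ) (S₀ : Matrix (Fin p) (Fin p) ℝ) (hS₀ : S₀.PosDef)
    (P₀ : Measure (Fin p → ℝ))
    (hP₀ : P₀ = volume.withDensity (fun x => ENNReal.ofReal (gpdf m₀ S₀ x)))
    (w : Fin k → ℝ) (m : Fin k → Fin p → ℝ) (S : Fin k → Matrix (Fin p) (Fin p) ℝ)
    (hw : ∀ j, 0 ≤ w j) (hw1 : (∑ j, w j) = 1) (hS : ∀ j, (S j).PosDef) :
    (∫ x, Real.log (gpdf m₀ S₀ x) ∂P₀) ≥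
      ∑ j, ∫ x in Zpart w m S j, Real.log (w j * gpdf (m j) (S j) x) ∂P₀ := by
  subst hP₀
  have hk : 0 < k := by
    rcases Nat.eq_zero_or_pos k with h | h
    · subst h; simp at hw1
    · exact h
  have hφpos : ∀ x, 0 < gpdf m₀ S₀ x := gpdf_pos m₀ hS₀
  have hφcont : Continuous (gpdf m₀ S₀) := gpdf_continuous m₀
  have hφmeas : Measurable fun x => (gpdf m₀ S₀ x).toNNReal :=
    (continuous_real_toNNReal.comp hφcont).measurable
  set c₀ : ℝ := (2 * π) ^ (-(p:ℝ)/2) * S₀.det ^ (-(1:ℝ)/2) with hc₀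
  have hc₀pos : 0 < c₀ := csS_pos hS₀
  -- conversion of integrals against P₀ into Lebesgue integrals with density
  have convAll : ∀ h : (Fin p → ℝ) → ℝ,
      ∫ x, h x ∂(volume.withDensity fun x => ENNReal.ofReal (gpdf m₀ S₀ x))
        = ∫ x, h x * gpdf m₀ S₀ x := by
    intro h
    have h1 : (fun x => ENNReal.ofReal (gpdf m₀ S₀ x))
        = (fun x => ((gpdf m₀ S₀ x).toNNReal : ENNReal)) := rfl
    rw [h1, integral_withDensity_eq_integral_smul hφmeas h]
    congr 1; funext x
    rw [NNReal.smul_def, Real.coe_toNNReal _ (hφpos x).le, smul_eq_mul, mul_comm]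
  have convSet : ∀ (s : Set (Fin p → ℝ)), MeasurableSet s → ∀ h : (Fin p → ℝ) → ℝ,
      ∫ x in s, h x ∂(volume.withDensity fun x => ENNReal.ofReal (gpdf m₀ S₀ x))
        = ∫ x, Set.indicator s (fun y => h y * gpdf m₀ S₀ y) x := by
    intro s hs h
    have h1 : (fun x => ENNReal.ofReal (gpdf m₀ S₀ x))
        = (fun x => ((gpdf m₀ S₀ x).toNNReal : ENNReal)) := rfl
    rw [h1, restrict_withDensity hs, integral_withDensity_eq_integral_smul hφmeas h]
    have h2 : ∀ x, ((gpdf m₀ S₀ x).toNNReal : NNReal) • h x = h x * gpdf m₀ S₀ x := fun x => by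
      rw [NNReal.smul_def, Real.coe_toNNReal _ (hφpos x).le, smul_eq_mul, mul_comm]
    simp_rw [h2]
    rw [← MeasureTheory.integral_indicator hs]
  -- the indicator integrands
  set F : Fin k → (Fin p → ℝ) → ℝ := fun j =>
    Set.indicator (Zpart w m S j)
      (fun y => Real.log (w j * gpdf (m j) (S j) y) * gpdf m₀ S₀ y) with hF
  set G : Fin k → (Fin p → ℝ) → ℝ := fun j =>
    Set.indicator (Zpart w m S j) (fun y => w j * gpdf (m j) (S j) y) with hG
  -- integrability of log φ₀ * φ₀
  have hA0 : Integrable (fun x => Real.log (gpdf m₀ S₀ x) * gpdf m₀ S₀ x) := by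
    obtain ⟨a, b, ha, hb, hbd⟩ := log_weighted_gpdf_bound m₀ hS₀ (one_pos)
    apply (integrable_poly_gauss hS₀.inv m₀ (a * c₀) (b * c₀)).mono
    · exact ((hφcont.log fun x => (hφpos x).ne').mul hφcont).aestronglyMeasurable
    · filter_upwards with x
      rw [Real.norm_eq_abs, Real.norm_eq_abs, abs_mul, abs_of_pos (hφpos x)]
      have hb1 : |Real.log (gpdf m₀ S₀ x)| ≤ a + b * ∑ i, x i ^ 2 := by
        have := hbd x; rwa [one_mul] at this
      have step : |Real.log (gpdf m₀ S₀ x)| * gpdf m₀ S₀ x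
          ≤ (a + b * ∑ i, x i ^ 2) * gpdf m₀ S₀ x :=
        mul_le_mul_of_nonneg_right hb1 (hφpos x).le
      refine step.trans ?_
      have heq : (a + b * ∑ i, x i ^ 2) * gpdf m₀ S₀ x
          = (a * c₀ + b * c₀ * ∑ i, x i ^ 2) * rexp (-(1/2) * qd S₀⁻¹ m₀ x) := by
        rw [gpdf_eq m₀ x, ← hc₀]; ring
      rw [heq]
      exact le_abs_self _
  have hφint : Integrable (gpdf m₀ S₀) := gpdf_integrable m₀ hS₀
  have hgint : ∀ j, Integrable (fun x => w j * gpdf (m j) (S j) x) := fun j =>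
    (gpdf_integrable (m j) (hS j)).const_mul (w j)
  have hGint : ∀ j, Integrable (G j) := by
    intro j
    apply (hgint j).mono
    · exact ((continuous_const.mul (gpdf_continuous (m j))).aestronglyMeasurable).indicator
        (measurableSet_Zpart w m S j)
    · filter_upwards with x
      simp only [hG]
      by_cases hx : x ∈ Zpart w m S j
      · rw [Set.indicator_of_mem hx]
      · rw [Set.indicator_of_notMem hx]
        simp only [norm_zero]
        exact norm_nonneg _
  have hFint : ∀ j, Integrable (F j) := by
    intro j
    rcases eq_or_lt_of_le (hw j) with hwj | hwj
    · have hZ : Zpart w m S j = ∅ := by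
        ext x
        simp only [Set.mem_empty_iff_false, iff_false]
        intro hx
        have := Zpart_w_pos w m S hw hw1 hS hx
        rw [← hwj] at this
        simp at this
      have : F j = fun _ => 0 := by
        funext x; rw [hF]; simp [hZ]
      rw [this]
      exact integrable_zero _ _ _
    · obtain ⟨a, b, ha, hb, hbd⟩ := log_weighted_gpdf_bound (m j) (hS j) hwj
      apply (integrable_poly_gauss hS₀.inv m₀ (a * c₀) (b * c₀)).mono
      · apply AEStronglyMeasurable.indicator _ (measurableSet_Zpart w m S j)
        refine (Continuous.mul ?_ hφcont).aestronglyMeasurable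
        exact (continuous_const.mul (gpdf_continuous (m j))).log
          fun x => (mul_pos hwj (gpdf_pos (m j) (hS j) x)).ne'
      · filter_upwards with x
        simp only [hF]
        by_cases hx : x ∈ Zpart w m S j
        · rw [Set.indicator_of_mem hx]
          rw [Real.norm_eq_abs, Real.norm_eq_abs, abs_mul, abs_of_pos (hφpos x)]
          refine ((mul_le_mul_of_nonneg_right (hbd x) (hφpos x).le).trans ?_).trans
            (le_abs_self _)
          rw [gpdf_eq m₀ x, ← hc₀]
          apply le_of_eq
          ring
        · rw [Set.indicator_of_notMem hx]
          simp only [norm_zero]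
          exact norm_nonneg _
  -- pointwise inequality
  have hpt : ∀ x, ∑ j, F j x ≤ Real.log (gpdf m₀ S₀ x) * gpdf m₀ S₀ x
      + ((∑ j, G j x) - gpdf m₀ S₀ x) := by
    intro x
    obtain ⟨j₀, hj₀, -⟩ := Zpart_exists_unique w m S hk x
    simp only [hF, hG]
    rw [Zpart_indicator_sum w m S hk x _ hj₀, Zpart_indicator_sum w m S hk x _ hj₀]
    have hg : 0 < w j₀ * gpdf (m j₀) (S j₀) x := Zpart_w_pos w m S hw hw1 hS hj₀
    have hφ := hφpos x
    have h1 : Real.log (w j₀ * gpdf (m j₀) (S j₀) x) - Real.log (gpdf m₀ S₀ x)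
        ≤ w j₀ * gpdf (m j₀) (S j₀) x / gpdf m₀ S₀ x - 1 := by
      rw [← Real.log_div hg.ne' hφ.ne']
      exact Real.log_le_sub_one_of_pos (div_pos hg hφ)
    have h2 := mul_le_mul_of_nonneg_right h1 hφ.le
    have h3 : (w j₀ * gpdf (m j₀) (S j₀) x / gpdf m₀ S₀ x - 1) * gpdf m₀ S₀ x
        = w j₀ * gpdf (m j₀) (S j₀) x - gpdf m₀ S₀ x := by field_simp
    nlinarith [h2, h3]
  -- each set integral of the indicator of g j is at most w j
  have hGle : ∀ j, ∫ x, G j x ≤ w j := by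
    intro j
    simp only [hG]
    rw [MeasureTheory.integral_indicator (measurableSet_Zpart w m S j)]
    calc ∫ x in Zpart w m S j, w j * gpdf (m j) (S j) x
        ≤ ∫ x, w j * gpdf (m j) (S j) x := by
          apply setIntegral_le_integral (hgint j)
          filter_upwards with x
          exact mul_nonneg (hw j) (gpdf_pos (m j) (hS j) x).le
      _ = w j := by
          rw [MeasureTheory.integral_const_mul, integral_gpdf (m j) (hS j), mul_one]
  -- assemble
  have hGsum : Integrable (fun x => ∑ j, G j x) := integrable_finset_sum _ fun j _ => hGint j
  have hGsub : Integrable (fun x => (∑ j, G j x) - gpdf m₀ S₀ x) := hGsum.sub hφint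
  have hRHSint : Integrable (fun x => Real.log (gpdf m₀ S₀ x) * gpdf m₀ S₀ x
      + ((∑ j, G j x) - gpdf m₀ S₀ x)) := hA0.add hGsub
  have main : ∑ j, ∫ x in Zpart w m S j, Real.log (w j * gpdf (m j) (S j) x)
        ∂(volume.withDensity fun x => ENNReal.ofReal (gpdf m₀ S₀ x))
      ≤ ∫ x, Real.log (gpdf m₀ S₀ x) * gpdf m₀ S₀ x := by
    calc ∑ j, ∫ x in Zpart w m S j, Real.log (w j * gpdf (m j) (S j) x)
          ∂(volume.withDensity fun x => ENNReal.ofReal (gpdf m₀ S₀ x))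
        = ∑ j, ∫ x, F j x := by
          refine Finset.sum_congr rfl fun j _ => ?_
          rw [convSet (Zpart w m S j) (measurableSet_Zpart w m S j)
            (fun x => Real.log (w j * gpdf (m j) (S j) x))]
      _ = ∫ x, ∑ j, F j x := (integral_finset_sum _ fun j _ => hFint j).symm
      _ ≤ ∫ x, (Real.log (gpdf m₀ S₀ x) * gpdf m₀ S₀ x + ((∑ j, G j x) - gpdf m₀ S₀ x)) := by
          apply integral_mono (integrable_finset_sum _ fun j _ => hFint j) hRHSint
          intro x
          exact hpt x
      _ = (∫ x, Real.log (gpdf m₀ S₀ x) * gpdf m₀ S₀ x)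
          + ((∑ j, ∫ x, G j x) - ∫ x, gpdf m₀ S₀ x) := by
          rw [integral_add hA0 hGsub, integral_sub hGsum hφint,
            integral_finset_sum _ fun j _ => hGint j]
      _ ≤ (∫ x, Real.log (gpdf m₀ S₀ x) * gpdf m₀ S₀ x) + ((∑ j, w j) - 1) := by
          have h1 : ∑ j, ∫ x, G j x ≤ ∑ j, w j := Finset.sum_le_sum fun j _ => hGle j
          have h2 : ∫ x, gpdf m₀ S₀ x = 1 := integral_gpdf m₀ hS₀
          rw [h2]
          linarith
      _ = ∫ x, Real.log (gpdf m₀ S₀ x) * gpdf m₀ S₀ x := by rw [hw1]; ring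
  rw [ge_iff_le, convAll (fun x => Real.log (gpdf m₀ S₀ x))]
  exact main
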